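/- Let p, q ≥ 5 be distinct primes with q > p, and n ≥ 1, m ≥ 0. Let L ⊆ Z/(p^(n-1)q^m) with 0 ∈ L and -L ⊆ L. Define K = { ±(ℓ + k p^(n-1) q^m) : ℓ ∈ L (lifted to {0,...,p^(n-1)q^m - 1}), 0 ≤ k < 2q } ⊆ Z/(p^n q^(m+1)). Then the image K mod p^(n-1)q^(m+1) is invariant under translation by p^(n-1)q^m, and the image K mod p^n q^m is invariant under translation by p^(n-1)q^m. -/
import Mathlib

/-- If `k ≡ k' [MOD e]` and `e * t = 0` in `ZMod d`, then `k*t = k'*t` in `ZMod d`. -/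
lemma congr_mul_t (d t e k k' : ℕ) (hd : (e : ZMod d) * t = 0)
    (h : k % e = k' % e) : ((k * t : ℕ) : ZMod d) = ((k' * t : ℕ) : ZMod d) := by
  have hk := Nat.mod_add_div k e
  have hk' := Nat.mod_add_div k' e
  calc ((k * t : ℕ) : ZMod d) = (((k % e + e * (k / e)) * t : ℕ) : ZMod d) := by rw [hk]
    _ = ((k % e : ℕ) : ZMod d) * t + ((k / e : ℕ) : ZMod d) * ((e : ZMod d) * t) := by
        push_cast; ring
    _ = ((k' % e : ℕ) : ZMod d) * t + ((k' / e : ℕ) : ZMod d) * ((e : ZMod d) * t) := by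
        rw [hd, h]; simp
    _ = (((k' % e + e * (k' / e)) * t : ℕ) : ZMod d) := by push_cast; ring
    _ = _ := by rw [hk']

lemma inv_aux (d t e Q : ℕ) (he : 0 < e) (heQ : e ≤ 2 * Q)
    (hd : (e : ZMod d) * t = 0) (A : Set ℕ) :
    (fun x => x + ((t : ℕ) : ZMod d)) ''
      {x | ∃ a ∈ A, ∃ k < 2 * Q,
        x = ((a + k * t : ℕ) : ZMod d) ∨ x = -((a + k * t : ℕ) : ZMod d)}
    = {x | ∃ a ∈ A, ∃ k < 2 * Q,
        x = ((a + k * t : ℕ) : ZMod d) ∨ x = -((a + k * t : ℕ) : ZMod d)} := by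
  have hcong1 : ∀ k : ℕ, (k + 1) % e % e = (k + 1) % e := fun k =>
    Nat.mod_mod_of_dvd _ dvd_rfl
  have hcong2 : ∀ k : ℕ, ((k + (e - 1)) % e + 1) % e = k % e := by
    intro k
    rw [Nat.mod_add_mod]
    have : k + (e - 1) + 1 = k + e := by omega
    rw [this, Nat.add_mod_right]
  ext y
  simp only [Set.mem_image, Set.mem_setOf_eq]
  constructor
  · rintro ⟨x, ⟨a, ha, k, hk, rfl | rfl⟩, rfl⟩
    · refine ⟨a, ha, (k + 1) % e, lt_of_lt_of_le (Nat.mod_lt _ he) heQ, Or.inl ?_⟩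
      have := congr_mul_t d t e ((k + 1) % e) (k + 1) hd (hcong1 k)
      push_cast at this ⊢
      linear_combination -this
    · refine ⟨a, ha, (k + (e - 1)) % e, lt_of_lt_of_le (Nat.mod_lt _ he) heQ, Or.inr ?_⟩
      have := congr_mul_t d t e ((k + (e - 1)) % e + 1) k hd (hcong2 k)
      push_cast at this ⊢
      linear_combination this
  · rintro ⟨a, ha, k, hk, rfl | rfl⟩
    · refine ⟨((a + (k + (e - 1)) % e * t : ℕ) : ZMod d),
        ⟨a, ha, (k + (e - 1)) % e, lt_of_lt_of_le (Nat.mod_lt _ he) heQ, Or.inl rfl⟩, ?_⟩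
      have := congr_mul_t d t e ((k + (e - 1)) % e + 1) k hd (hcong2 k)
      push_cast at this ⊢
      linear_combination this
    · refine ⟨-((a + (k + 1) % e * t : ℕ) : ZMod d),
        ⟨a, ha, (k + 1) % e, lt_of_lt_of_le (Nat.mod_lt _ he) heQ, Or.inr rfl⟩, ?_⟩
      have := congr_mul_t d t e ((k + 1) % e) (k + 1) hd (hcong1 k)
      push_cast at this ⊢
      linear_combination -this

/-- case (IV)(a) of Lemma 4.3: the reductions of the constructed
set `K` modulo `p^(n-1) q^(m+1)` and modulo `p^n q^m` are invariant under
translation by `p^(n-1) q^m`. -/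
theorem stmt7 (p q n m : ℕ) (hp : p.Prime) (hq : q.Prime) (hp5 : 5 ≤ p)
    (hq5 : 5 ≤ q) (hpq : p < q) (hn : 1 ≤ n)
    (L : Set (ZMod (p ^ (n - 1) * q ^ m))) (hL0 : (0 : ZMod (p ^ (n - 1) * q ^ m)) ∈ L)
    (hLneg : ∀ x ∈ L, -x ∈ L)
    (K : Set (ZMod (p ^ n * q ^ (m + 1))))
    (hK : K = {x | ∃ ℓ ∈ L, ∃ k < 2 * q,
      x = ((ℓ.val + k * (p ^ (n - 1) * q ^ m) : ℕ) : ZMod (p ^ n * q ^ (m + 1))) ∨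
      x = -((ℓ.val + k * (p ^ (n - 1) * q ^ m) : ℕ) : ZMod (p ^ n * q ^ (m + 1)))}) :
    (fun x => x + ((p ^ (n - 1) * q ^ m : ℕ) : ZMod (p ^ (n - 1) * q ^ (m + 1)))) ''
        ((ZMod.castHom (mul_dvd_mul (pow_dvd_pow p (Nat.sub_le n 1)) dvd_rfl)
          (ZMod (p ^ (n - 1) * q ^ (m + 1)))) '' K)
      = (ZMod.castHom (mul_dvd_mul (pow_dvd_pow p (Nat.sub_le n 1)) dvd_rfl)
          (ZMod (p ^ (n - 1) * q ^ (m + 1)))) '' K ∧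
    (fun x => x + ((p ^ (n - 1) * q ^ m : ℕ) : ZMod (p ^ n * q ^ m))) ''
        ((ZMod.castHom (mul_dvd_mul dvd_rfl (pow_dvd_pow q (Nat.le_succ m)))
          (ZMod (p ^ n * q ^ m))) '' K)
      = (ZMod.castHom (mul_dvd_mul dvd_rfl (pow_dvd_pow q (Nat.le_succ m)))
          (ZMod (p ^ n * q ^ m))) '' K := by
  -- description of the image of K under any cast hom
  have himg : ∀ (d : ℕ) (hdvd : d ∣ p ^ n * q ^ (m + 1)),
      (ZMod.castHom hdvd (ZMod d)) '' K
        = {x | ∃ a ∈ ZMod.val '' L, ∃ k < 2 * q,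
            x = ((a + k * (p ^ (n - 1) * q ^ m) : ℕ) : ZMod d) ∨
            x = -((a + k * (p ^ (n - 1) * q ^ m) : ℕ) : ZMod d)} := by
    intro d hdvd
    subst hK
    ext y
    simp only [Set.mem_image, Set.mem_setOf_eq]
    constructor
    · rintro ⟨x, ⟨ℓ, hℓ, k, hk, rfl | rfl⟩, rfl⟩
      · exact ⟨ℓ.val, ⟨ℓ, hℓ, rfl⟩, k, hk, Or.inl (map_natCast _ _)⟩
      · exact ⟨ℓ.val, ⟨ℓ, hℓ, rfl⟩, k, hk, Or.inr (by rw [map_neg, map_natCast])⟩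
    · rintro ⟨a, ⟨ℓ, hℓ, rfl⟩, k, hk, rfl | rfl⟩
      · exact ⟨_, ⟨ℓ, hℓ, k, hk, Or.inl rfl⟩, map_natCast _ _⟩
      · exact ⟨_, ⟨ℓ, hℓ, k, hk, Or.inr rfl⟩, by rw [map_neg, map_natCast]⟩
  constructor
  · rw [himg _ _]
    refine inv_aux _ (p ^ (n - 1) * q ^ m) q q hq.pos (by omega) ?_ _
    have h1 : q * (p ^ (n - 1) * q ^ m) = p ^ (n - 1) * q ^ (m + 1) := by
      rw [pow_succ]; ring
    calc (q : ZMod (p ^ (n - 1) * q ^ (m + 1))) * ((p ^ (n - 1) * q ^ m : ℕ) : _)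
        = ((q * (p ^ (n - 1) * q ^ m) : ℕ) : ZMod (p ^ (n - 1) * q ^ (m + 1))) := by
          push_cast; ring
      _ = 0 := by rw [h1]; exact ZMod.natCast_self _
  · rw [himg _ _]
    refine inv_aux _ (p ^ (n - 1) * q ^ m) p q hp.pos (by omega) ?_ _
    have hn' : n - 1 + 1 = n := by omega
    have h1 : p * (p ^ (n - 1) * q ^ m) = p ^ n * q ^ m := by
      conv_rhs => rw [← hn']
      rw [pow_succ]; ring
    calc (p : ZMod (p ^ n * q ^ m)) * ((p ^ (n - 1) * q ^ m : ℕ) : _)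
        = ((p * (p ^ (n - 1) * q ^ m) : ℕ) : ZMod (p ^ n * q ^ m)) := by push_cast; ring
      _ = 0 := by rw [h1]; exact ZMod.natCast_self _
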